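/- Let φ : V → V be an endomorphism of a vector space over a field K (not assumed finite-dimensional), and form the direct limit V_∞ of the constant direct system V → V → V → … with all bonding maps φ, with canonical map π : V → V_∞. If V is finite dimensional and W := im φ^m is the stabilized image, then π restricted to W is an isomorphism of W onto V_∞, and it conjugates φ|_W with the endomorphism φ_∞ of V_∞ induced by φ. -/

import Mathlib

noncomputable section

variable {K V : Type*} [Field K] [AddCommGroup V] [Module K V]

/-- The constant direct system `V → V → V → …` with all bonding maps equal to `φ`:
the bonding map from stage `i` to stage `j` is `φ^(j−i)`. -/
def constSys (φ : V →ₗ[K] V) : ∀ i j : ℕ, i ≤ j → V →ₗ[K] V :=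
  fun i j _ => φ ^ (j - i)

instance constSys_directedSystem (φ : V →ₗ[K] V) :
    DirectedSystem (fun _ : ℕ => V) (fun i j h => constSys φ i j h) where
  map_self := by
    intro i x
    simp [constSys]
  map_map := by
    intro k j i hij hjk x
    simp only [constSys, ← Module.End.mul_apply, ← pow_add]
    congr 2
    omega

/-- The direct limit `V_∞` of the constant system `V → V → V → …` with bonding maps `φ`. -/
def constLimit (φ : V →ₗ[K] V) : Type _ :=
  Module.DirectLimit (fun _ : ℕ => V) (constSys φ)

instance (φ : V →ₗ[K] V) : AddCommGroup (constLimit φ) :=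
  inferInstanceAs (AddCommGroup (Module.DirectLimit (fun _ : ℕ => V) (constSys φ)))

instance (φ : V →ₗ[K] V) : Module K (constLimit φ) :=
  inferInstanceAs (Module K (Module.DirectLimit (fun _ : ℕ => V) (constSys φ)))

/-- The canonical projection `π : V → V_∞` from the first term of the sequence. -/
def constLimitPi (φ : V →ₗ[K] V) : V →ₗ[K] constLimit φ :=
  Module.DirectLimit.of K ℕ (fun _ : ℕ => V) (constSys φ) 0

/-- The endomorphism `φ_∞` of `V_∞` induced by the vertical maps `φ` between two copies
of the constant direct system. -/
def constLimitMap (φ : V →ₗ[K] V) : constLimit φ →ₗ[K] constLimit φ :=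
  Module.DirectLimit.map (f := constSys φ) (f' := constSys φ) (fun _ => φ)
    (by
      intro i j h
      ext x
      simp only [LinearMap.comp_apply, constSys, ← Module.End.mul_apply]
      rw [← pow_succ, ← pow_succ'])

/-- Leray reduction: if `V` is finite dimensional and `W = im φ^m` is the stabilized image,
then the canonical projection `π : V → V_∞` restricts to an isomorphism of `W` onto `V_∞`
which conjugates `φ|_W` with the induced endomorphism `φ_∞`. -/
theorem stmt_16 [FiniteDimensional K V] (φ : V →ₗ[K] V) (m : ℕ)
    (hm : LinearMap.range (φ ^ m) = LinearMap.range (φ ^ (m + 1))) :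
    Function.Bijective
        (fun x : LinearMap.range (φ ^ m) => constLimitPi φ (x : V)) ∧
      ∀ x : LinearMap.range (φ ^ m),
        constLimitMap φ (constLimitPi φ (x : V)) = constLimitPi φ (φ (x : V)) := by
  classical
  set W := LinearMap.range (φ ^ m) with hW
  -- `φ` maps `W` onto `W`
  have key : LinearMap.range (φ ^ (m + 1)) = (LinearMap.range (φ ^ m)).map φ := by
    rw [pow_succ', Module.End.mul_eq_comp, LinearMap.range_comp]
  have hmap : W.map φ = W := by
    rw [hW] at hm ⊢
    rw [← key, ← hm]
  have hmem : ∀ w ∈ W, φ w ∈ W := by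
    intro w hw
    rw [← hmap]
    exact Submodule.mem_map_of_mem hw
  have hsurj1 : ∀ w ∈ W, ∃ w' ∈ W, φ w' = w := by
    intro w hw
    rw [← hmap] at hw
    obtain ⟨w', hw', h⟩ := Submodule.mem_map.1 hw
    exact ⟨w', hw', h⟩
  -- the restriction of `φ` to `W` is injective
  have hinj1 : ∀ w ∈ W, φ w = 0 → w = 0 := by
    let ψ : W →ₗ[K] W := φ.restrict hmem
    have hψsurj : Function.Surjective ψ := by
      rintro ⟨w, hw⟩
      obtain ⟨w', hw', h⟩ := hsurj1 w hw
      exact ⟨⟨w', hw'⟩, Subtype.ext h⟩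
    have hψinj : Function.Injective ψ :=
      (LinearMap.injective_iff_surjective).2 hψsurj
    intro w hw h0
    have : ψ ⟨w, hw⟩ = ψ 0 := by
      apply Subtype.ext
      simpa [ψ, LinearMap.restrict_apply] using h0
    simpa using congrArg Subtype.val (hψinj this)
  have hinjpow : ∀ j : ℕ, ∀ w ∈ W, (φ ^ j) w = 0 → w = 0 := by
    intro j
    induction j with
    | zero => intro w _ h; simpa using h
    | succ j ih =>
      intro w hw h
      have h' : (φ ^ j) (φ w) = 0 := by
        rw [← Module.End.mul_apply, ← pow_succ]
        exact h
      exact hinj1 w hw (ih (φ w) (hmem w hw) h')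
  have hsurjpow : ∀ j : ℕ, ∀ w ∈ W, ∃ w' ∈ W, (φ ^ j) w' = w := by
    intro j
    induction j with
    | zero => intro w hw; exact ⟨w, hw, by simp⟩
    | succ j ih =>
      intro w hw
      obtain ⟨w', hw', h'⟩ := ih w hw
      obtain ⟨w'', hw'', h''⟩ := hsurj1 w' hw'
      refine ⟨w'', hw'', ?_⟩
      rw [pow_succ, Module.End.mul_apply, h'', h']
  constructor
  · constructor
    · -- injectivity
      intro x y hxy
      have h0 : constLimitPi φ ((x : V) - (y : V)) = 0 := by
        rw [map_sub, sub_eq_zero]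
        exact hxy
      obtain ⟨j, hj, hzero⟩ := Module.DirectLimit.of.zero_exact h0
      have hzero' : (φ ^ j) ((x : V) - (y : V)) = 0 := by
        simpa [constSys] using hzero
      have hmemxy : (x : V) - (y : V) ∈ W := sub_mem x.2 y.2
      have := hinjpow j _ hmemxy hzero'
      exact Subtype.ext (sub_eq_zero.1 this)
    · -- surjectivity
      intro z
      obtain ⟨j, x, hx⟩ := Module.DirectLimit.exists_of z
      obtain ⟨w, hw, hwx⟩ := hsurjpow (j + m) ((φ ^ m) x) (LinearMap.mem_range_self _ x)
      refine ⟨⟨w, hw⟩, ?_⟩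
      have e1 : Module.DirectLimit.of K ℕ (fun _ : ℕ => V) (constSys φ) 0 w
          = Module.DirectLimit.of K ℕ (fun _ : ℕ => V) (constSys φ) (j + m)
              (constSys φ 0 (j + m) (Nat.zero_le _) w) := by
        rw [Module.DirectLimit.of_f]
      have e2 : constSys φ 0 (j + m) (Nat.zero_le _) w = constSys φ j (j + m) (Nat.le_add_right _ _) x := by
        simp only [constSys, Nat.sub_zero, Nat.add_sub_cancel_left]
        rw [hwx]
      show Module.DirectLimit.of K ℕ (fun _ : ℕ => V) (constSys φ) 0 w = z
      rw [e1, e2, Module.DirectLimit.of_f]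
      exact hx
  · intro x
    simp only [constLimitMap, constLimitPi]
    exact Module.DirectLimit.map_apply_of _ _ _

end
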